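/- Every ring homomorphism σ : 𝔽_q → 𝔽_q^{n×n} is diagonalizable: there exist an invertible matrix A ∈ 𝔽_q^{n×n} and field automorphisms σ_1, …, σ_n of 𝔽_q such that σ(a) = A · diag(σ_1(a), …, σ_n(a)) · A^{−1} for all a ∈ 𝔽_q. -/

import Mathlib

open Polynomial Module

lemma my_ker_aeval_prod {K V : Type*} [Field K] [AddCommGroup V] [Module K V]
    (f : Module.End K V) (s : Finset K) :
    LinearMap.ker (aeval f (∏ c ∈ s, (X - C c))) = ⨆ c ∈ s, f.eigenspace c := by
  classical
  induction s using Finset.induction_on with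
  | empty => simp [Module.End.one_eq_id]
  | @insert a s ha ih =>
    have hcop : IsCoprime (X - C a) (∏ c ∈ s, (X - C c)) :=
      IsCoprime.prod_right fun c hc =>
        Polynomial.pairwise_coprime_X_sub_C (Function.injective_id)
          (show a ≠ c from fun h => ha (h ▸ hc))
    rw [Finset.prod_insert ha, ← Polynomial.sup_ker_aeval_eq_ker_aeval_mul_of_coprime f hcop,
      ih, Finset.iSup_insert]
    congr 1
    rw [Module.End.eigenspace_def]
    congr 1
    simp [Module.algebraMap_end_eq_smul_id, Module.End.one_eq_id]

lemma my_diag {F : Type*} [Field F] [Fintype F] {n : ℕ}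
    (M : Matrix (Fin n) (Fin n) F) (hM : M ^ Fintype.card F = M) :
    ∃ (A : GL (Fin n) F) (d : Fin n → F),
      M = (A : Matrix (Fin n) (Fin n) F) * Matrix.diagonal d *
        ((A⁻¹ : GL (Fin n) F) : Matrix (Fin n) (Fin n) F) := by
  classical
  set q := Fintype.card F with hq
  set f : Module.End F (Fin n → F) := Matrix.toLinAlgEquiv' M with hf
  -- the polynomial ∏ (X - C c) equals X^q - X
  have hq1 : 1 < q := Fintype.one_lt_card
  have hmonic : (X ^ q - X : F[X]).Monic := by
    apply Polynomial.monic_X_pow_sub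
    rw [Polynomial.degree_X]
    exact_mod_cast hq1
  have hroots : (X ^ q - X : F[X]).roots = Finset.univ.val :=
    FiniteField.roots_X_pow_card_sub_X F
  have hdeg : (X ^ q - X : F[X]).natDegree = q := FiniteField.X_pow_card_sub_X_natDegree_eq F hq1
  have hsplits : Splits (X ^ q - X : F[X]) := by
    apply Polynomial.splits_iff_card_roots.mpr
    rw [hroots, hdeg]
    exact Finset.card_univ
  have hprod : (X ^ q - X : F[X]) = ∏ c : F, (X - C c) := by
    have := hsplits.eq_prod_roots_of_monic hmonic
    rw [this, hroots]
    rfl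
  -- f is killed by X^q - X
  have haev : aeval f (X ^ q - X : F[X]) = 0 := by
    rw [map_sub, map_pow, aeval_X, hf, ← map_pow, hM, sub_self]
  have hsup : ⨆ c : F, f.eigenspace c = ⊤ := by
    have h1 : LinearMap.ker (aeval f (∏ c : F, (X - C c))) = ⊤ := by
      rw [← hprod, haev]; exact LinearMap.ker_zero
    have := my_ker_aeval_prod f Finset.univ
    rw [h1] at this
    simpa using this.symm
  have hInt : DirectSum.IsInternal f.eigenspace :=
    (DirectSum.isInternal_submodule_iff_iSupIndep_and_iSup_eq_top _).mpr
      ⟨f.eigenspaces_iSupIndep, hsup⟩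
  let w : ∀ c : F, Basis _ F (f.eigenspace c) := fun c => Basis.ofVectorSpace F _
  let b0 := hInt.collectedBasis w
  let e := b0.indexEquiv (Pi.basisFun F (Fin n))
  let b := b0.reindex e
  let μ : Fin n → F := fun i => (e.symm i).1
  have hb : ∀ i, f (b i) = μ i • b i := by
    intro i
    have hmem : b0 (e.symm i) ∈ f.eigenspace ((e.symm i).1) :=
      hInt.collectedBasis_mem w (e.symm i)
    have := Module.End.mem_eigenspace_iff.mp hmem
    simpa [b, Basis.reindex_apply, μ] using this
  have hD : LinearMap.toMatrix b b f = Matrix.diagonal μ := by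
    ext i j
    rw [LinearMap.toMatrix_apply, hb j]
    rcases eq_or_ne i j with h | h
    · subst h; simp [Matrix.diagonal_apply_eq]
    · simp [Matrix.diagonal_apply_ne _ h, Finsupp.single_apply, Ne.symm h]
  set std := Pi.basisFun F (Fin n) with hstd
  have key := basis_toMatrix_mul_linearMap_toMatrix_mul_basis_toMatrix
    (b' := b) (b := std) (c' := b) (c := std) (f := f)
  have hMf : LinearMap.toMatrix std std f = M := by
    rw [hstd, LinearMap.toMatrix_eq_toMatrix']
    rw [hf]
    exact LinearMap.toMatrix'_toLin' M
  have h1 : std.toMatrix b * b.toMatrix std = 1 := Basis.toMatrix_mul_toMatrix_flip _ _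
  have h2 : b.toMatrix std * std.toMatrix b = 1 := Basis.toMatrix_mul_toMatrix_flip _ _
  refine ⟨⟨std.toMatrix b, b.toMatrix std, h1, h2⟩, μ, ?_⟩
  rw [← hMf, ← key, hD]
  rfl

theorem stmt_9 (F : Type*) [Field F] [Fintype F] (n : ℕ)
    (σ : F →+* Matrix (Fin n) (Fin n) F) :
    ∃ (A : GL (Fin n) F) (s : Fin n → (F ≃+* F)),
      ∀ a : F, σ a = (A : Matrix (Fin n) (Fin n) F) *
        Matrix.diagonal (fun i => s i a) * ((A⁻¹ : GL (Fin n) F) : Matrix (Fin n) (Fin n) F) := by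
  classical
  obtain ⟨g, hg⟩ := IsCyclic.exists_generator (α := Fˣ)
  have hM : (σ (g : F)) ^ Fintype.card F = σ (g : F) := by
    rw [← map_pow, FiniteField.pow_card]
  obtain ⟨A, d, hAd⟩ := my_diag (σ (g : F)) hM
  let D : F → Matrix (Fin n) (Fin n) F :=
    fun a => ((A⁻¹ : GL (Fin n) F) : Matrix (Fin n) (Fin n) F) * σ a *
      (A : Matrix (Fin n) (Fin n) F)
  have hAinv : (A : Matrix (Fin n) (Fin n) F) *
      ((A⁻¹ : GL (Fin n) F) : Matrix (Fin n) (Fin n) F) = 1 := A.mul_inv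
  have hinvA : ((A⁻¹ : GL (Fin n) F) : Matrix (Fin n) (Fin n) F) *
      (A : Matrix (Fin n) (Fin n) F) = 1 := A.inv_mul
  have hDmul : ∀ x y, D (x * y) = D x * D y := by
    intro x y
    show (↑A⁻¹ : Matrix (Fin n) (Fin n) F) * σ (x * y) * (↑A : Matrix (Fin n) (Fin n) F) = ((↑A⁻¹ : Matrix (Fin n) (Fin n) F) * σ x * (↑A : Matrix (Fin n) (Fin n) F)) * ((↑A⁻¹ : Matrix (Fin n) (Fin n) F) * σ y * (↑A : Matrix (Fin n) (Fin n) F))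
    rw [map_mul]
    calc (↑A⁻¹ : Matrix (Fin n) (Fin n) F) * (σ x * σ y) * (↑A : Matrix (Fin n) (Fin n) F)
        = (↑A⁻¹ : Matrix (Fin n) (Fin n) F) * σ x * (((↑A : Matrix (Fin n) (Fin n) F) * (↑A⁻¹ : Matrix (Fin n) (Fin n) F)) * σ y * (↑A : Matrix (Fin n) (Fin n) F)) := by rw [hAinv]; noncomm_ring
      _ = ((↑A⁻¹ : Matrix (Fin n) (Fin n) F) * σ x * (↑A : Matrix (Fin n) (Fin n) F)) * ((↑A⁻¹ : Matrix (Fin n) (Fin n) F) * σ y * (↑A : Matrix (Fin n) (Fin n) F)) := by noncomm_ring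
  have hDone : D 1 = 1 := by
    show (↑A⁻¹ : Matrix (Fin n) (Fin n) F) * σ 1 * (↑A : Matrix (Fin n) (Fin n) F) = 1
    rw [map_one, mul_one, hinvA]
  have hDg : D (g : F) = Matrix.diagonal d := by
    show (↑A⁻¹ : Matrix (Fin n) (Fin n) F) * σ (g : F) * (↑A : Matrix (Fin n) (Fin n) F) = Matrix.diagonal d
    rw [hAd]
    calc (↑A⁻¹ : Matrix (Fin n) (Fin n) F) * ((↑A : Matrix (Fin n) (Fin n) F) * Matrix.diagonal d * (↑A⁻¹ : Matrix (Fin n) (Fin n) F)) * (↑A : Matrix (Fin n) (Fin n) F)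
        = ((↑A⁻¹ : Matrix (Fin n) (Fin n) F) * (↑A : Matrix (Fin n) (Fin n) F)) * Matrix.diagonal d * ((↑A⁻¹ : Matrix (Fin n) (Fin n) F) * (↑A : Matrix (Fin n) (Fin n) F)) := by noncomm_ring
      _ = Matrix.diagonal d := by rw [hinvA]; simp
  have hDpow : ∀ k : ℕ, D ((g : F) ^ k) = Matrix.diagonal (fun i => d i ^ k) := by
    intro k
    induction k with
    | zero => simpa using hDone
    | succ k ih =>
      rw [pow_succ, hDmul, ih, hDg, Matrix.diagonal_mul_diagonal]
      simp [pow_succ]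
  have hDdiag : ∀ a : F, ∃ e : Fin n → F, D a = Matrix.diagonal e := by
    intro a
    rcases eq_or_ne a 0 with rfl | ha
    · refine ⟨0, ?_⟩
      show (↑A⁻¹ : Matrix (Fin n) (Fin n) F) * σ 0 * (↑A : Matrix (Fin n) (Fin n) F) = Matrix.diagonal 0
      rw [map_zero]
      ext i j
      rcases eq_or_ne i j with rfl | h
      · simp
      · simp [Matrix.diagonal_apply_ne _ h]
    · obtain ⟨k, hk⟩ := mem_powers_iff_mem_zpowers.mpr (hg (Units.mk0 a ha))
      have hk2 : (g ^ k : Fˣ) = Units.mk0 a ha := hk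
      have hk' : ((g : F)) ^ k = a := by
        have h2 : ((g ^ k : Fˣ) : F) = a := by rw [hk2]; rfl
        simpa using h2
      exact ⟨fun i => d i ^ k, by rw [← hk']; exact hDpow k⟩
  have hDdd : ∀ a : F, D a = Matrix.diagonal (fun i => D a i i) := by
    intro a
    obtain ⟨e, he⟩ := hDdiag a
    rw [he]
    exact congrArg Matrix.diagonal (funext fun i => (Matrix.diagonal_apply_eq e i).symm)
  have hDadd : ∀ x y, D (x + y) = D x + D y := by
    intro x y
    show (↑A⁻¹ : Matrix (Fin n) (Fin n) F) * σ (x + y) * (↑A : Matrix (Fin n) (Fin n) F) = (↑A⁻¹ : Matrix (Fin n) (Fin n) F) * σ x * (↑A : Matrix (Fin n) (Fin n) F) + (↑A⁻¹ : Matrix (Fin n) (Fin n) F) * σ y * (↑A : Matrix (Fin n) (Fin n) F)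
    rw [map_add]
    noncomm_ring
  let s0 : Fin n → (F →+* F) := fun i =>
    { toFun := fun a => D a i i
      map_one' := by
        show D 1 i i = 1
        rw [hDone]; exact Matrix.one_apply_eq i
      map_mul' := by
        intro x y
        show D (x * y) i i = D x i i * D y i i
        obtain ⟨e, he⟩ := hDdiag x
        rw [hDmul, he, Matrix.diagonal_mul, Matrix.diagonal_apply_eq]
      map_zero' := by
        show D 0 i i = 0
        have : D 0 = 0 := by
          show (↑A⁻¹ : Matrix (Fin n) (Fin n) F) * σ 0 * (↑A : Matrix (Fin n) (Fin n) F) = 0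
          rw [map_zero]; simp
        rw [this]; rfl
      map_add' := by
        intro x y
        show D (x + y) i i = D x i i + D y i i
        rw [hDadd]; rfl }
  have hbij : ∀ i, Function.Bijective (s0 i) := fun i =>
    (Finite.injective_iff_bijective).mp (s0 i).injective
  refine ⟨A, fun i => RingEquiv.ofBijective (s0 i) (hbij i), fun a => ?_⟩
  have hdiagD : Matrix.diagonal (fun i => (RingEquiv.ofBijective (s0 i) (hbij i)) a) = D a :=
    (hDdd a).symm
  rw [hdiagD]
  show σ a = (↑A : Matrix (Fin n) (Fin n) F) * ((↑A⁻¹ : Matrix (Fin n) (Fin n) F) * σ a * (↑A : Matrix (Fin n) (Fin n) F)) * (↑A⁻¹ : Matrix (Fin n) (Fin n) F)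
  calc σ a = ((↑A : Matrix (Fin n) (Fin n) F) * (↑A⁻¹ : Matrix (Fin n) (Fin n) F)) * σ a * ((↑A : Matrix (Fin n) (Fin n) F) * (↑A⁻¹ : Matrix (Fin n) (Fin n) F)) := by rw [hAinv]; simp
    _ = (↑A : Matrix (Fin n) (Fin n) F) * ((↑A⁻¹ : Matrix (Fin n) (Fin n) F) * σ a * (↑A : Matrix (Fin n) (Fin n) F)) * (↑A⁻¹ : Matrix (Fin n) (Fin n) F) := by noncomm_ring
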